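/- Let (X,d) be a geodesic metric space in which all geodesic triangles are δ-thin, i.e., for any points x,y,z, any geodesic segments [x,y], [x,z], [y,z], and any points p ∈ [x,y], q ∈ [x,z] with d(x,p) = d(x,q) ≤ (y|z)_x, one has d(p,q) ≤ δ (and the analogous condition at the corners y and z). Then (X,d) is δ-hyperbolic: for all points u,v,w,x ∈ X, (u|w)_x ≥ min{(u|v)_x, (v|w)_x} − δ. -/
import Mathlib


/-- The Gromov product `(x|y)_z = ½(d(x,z) + d(z,y) − d(x,y))` in a metric space. -/
noncomputable def gromovProd {X : Type*} [MetricSpace X] (x y z : X) : ℝ :=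
  (dist x z + dist z y - dist x y) / 2

/-- `f : ℝ → X` parametrizes (by arc length) a geodesic segment joining `x` and `y`. -/
def IsGeodesicSegment {X : Type*} [MetricSpace X] (x y : X) (f : ℝ → X) : Prop :=
  f 0 = x ∧ f (dist x y) = y ∧
    ∀ s ∈ Set.Icc (0 : ℝ) (dist x y), ∀ t ∈ Set.Icc (0 : ℝ) (dist x y),
      dist (f s) (f t) = |s - t|

/-- A metric space is geodesic if any two points are joined by a geodesic segment. -/
def IsGeodesicSpace (X : Type*) [MetricSpace X] : Prop :=
  ∀ x y : X, ∃ f : ℝ → X, IsGeodesicSegment x y f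

/-- A geodesic metric space with `δ`-thin geodesic triangles (thinness stated at every
corner, since `x`, `y`, `z` range over all points) is `δ`-hyperbolic. -/
theorem stmt_10 {X : Type*} [MetricSpace X] (δ : ℝ) (hδ : 0 ≤ δ)
    (hgeo : IsGeodesicSpace X)
    (hthin : ∀ (x y z : X) (f g : ℝ → X), IsGeodesicSegment x y f → IsGeodesicSegment x z g →
      ∀ s : ℝ, 0 ≤ s → s ≤ gromovProd y z x → dist (f s) (g s) ≤ δ) :
    ∀ u v w x : X, min (gromovProd u v x) (gromovProd v w x) - δ ≤ gromovProd u w x := by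
  intro u v w x
  obtain ⟨f, hf⟩ := hgeo x u
  obtain ⟨g, hg⟩ := hgeo x v
  obtain ⟨h, hh⟩ := hgeo x w
  set s := min (gromovProd u v x) (gromovProd v w x) with hsdef
  have h1 : s ≤ gromovProd u v x := min_le_left _ _
  have h2 : s ≤ gromovProd v w x := min_le_right _ _
  have hs0 : 0 ≤ s := by
    apply le_min <;> unfold gromovProd <;>
      linarith [dist_triangle u x v, dist_triangle v x w]
  have hsu : s ≤ dist x u := by
    have : gromovProd u v x ≤ dist x u := by
      unfold gromovProd
      linarith [dist_triangle x u v, dist_comm x u, dist_comm u x]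
    linarith
  have hsw : s ≤ dist x w := by
    have : gromovProd v w x ≤ dist x w := by
      unfold gromovProd
      linarith [dist_triangle v w x, dist_comm w x]
    linarith
  have d1 : dist (f s) (g s) ≤ δ := hthin x u v f g hf hg s hs0 h1
  have d2 : dist (g s) (h s) ≤ δ := hthin x v w g h hg hh s hs0 h2
  have hfu : dist (f s) u = dist x u - s := by
    have := hf.2.2 s ⟨hs0, hsu⟩ (dist x u) ⟨dist_nonneg, le_refl _⟩
    rw [hf.2.1] at this
    rw [this, abs_of_nonpos (by linarith)]; ring
  have hhw : dist (h s) w = dist x w - s := by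
    have := hh.2.2 s ⟨hs0, hsw⟩ (dist x w) ⟨dist_nonneg, le_refl _⟩
    rw [hh.2.1] at this
    rw [this, abs_of_nonpos (by linarith)]; ring
  have key : dist u w ≤ dist u (f s) + dist (f s) (g s) + dist (g s) (h s) + dist (h s) w := by
    have := dist_triangle4 u (f s) (h s) w
    have := dist_triangle (f s) (g s) (h s)
    linarith
  unfold gromovProd
  have := dist_comm u (f s)
  have := dist_comm u x
  have := dist_comm w x
  linarith
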